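/- Let A ∈ ℝ^{m×n}, y ∈ ℝ^m, ρ ≥ 0, and let R : ℝ^n → ℝ ∪ {+∞} be proper and lower semicontinuous. Assume: (i) there exists x ∈ dom(R) with ‖y − |Ax|²‖₂ ≤ ρ; (ii) R is non-negative; (iii) Ker(R_∞) ∩ Ker(A) = {0}, where R_∞ is the asymptotic function of R. Then the set of minimizers of R over {x ∈ ℝ^n : ‖y − |Ax|²‖₂ ≤ ρ} is non-empty and compact. -/
import Mathlib


open MeasureTheory ProbabilityTheory Filter
open scoped NNReal ENNReal BigOperators

noncomputable section

/-- The Euclidean (`ℓ²`) norm on `Fin n → ℝ`. -/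
def enorm2 {n : ℕ} (x : Fin n → ℝ) : ℝ := Real.sqrt (∑ i, x i ^ 2)

/-- Matrix-vector multiplication for `A ∈ ℝ^{m×n}`. -/
def mulVec' {m n : ℕ} (A : Fin m → Fin n → ℝ) (x : Fin n → ℝ) : Fin m → ℝ :=
  fun i => ∑ j, A i j * x j

/-- The asymptotic (recession) function `R_∞(z) = liminf_{z'→z, t→∞} R(t z')/t`. -/
def asympFun {n : ℕ} (R : (Fin n → ℝ) → EReal) (z : Fin n → ℝ) : EReal :=
  Filter.liminf (fun p : (Fin n → ℝ) × ℝ => R (p.2 • p.1) * ((p.2⁻¹ : ℝ) : EReal))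
    ((nhds z) ×ˢ Filter.atTop)

/-- The noiseless feasible set `{x : |Ax| = √ȳ entrywise}`. -/
def feasSet {m n : ℕ} (A : Fin m → Fin n → ℝ) (ybar : Fin m → ℝ) : Set (Fin n → ℝ) :=
  {x | ∀ r, |mulVec' A x r| = Real.sqrt (ybar r)}

/-- Set of minimizers of `R` over `S`. -/
def argminOn {α β : Type*} [Preorder β] (R : α → β) (S : Set α) : Set α :=
  {x ∈ S | ∀ z ∈ S, R x ≤ R z}

/-- Convexity for `EReal`-valued functions. -/
def ERealConvex {n : ℕ} (R : (Fin n → ℝ) → EReal) : Prop :=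
  ∀ x y : Fin n → ℝ, ∀ a b : ℝ, 0 ≤ a → 0 ≤ b → a + b = 1 →
    R (a • x + b • y) ≤ (a : EReal) * R x + (b : EReal) * R y

/-- Descent cone of `R` at `x̄`. -/
def descentCone {n : ℕ} {β : Type*} [Preorder β] (R : (Fin n → ℝ) → β)
    (xbar : Fin n → ℝ) : Set (Fin n → ℝ) :=
  {z | ∃ t : ℝ, 0 < t ∧ R (xbar + t • z) ≤ R xbar}

/-- Euclidean unit sphere of `ℝⁿ`. -/
def unitSphere (n : ℕ) : Set (Fin n → ℝ) := {x | enorm2 x = 1}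

/-- The constant ν = (1/18)√(π/2). -/
def nu : ℝ := (1 / 18) * Real.sqrt (Real.pi / 2)

/-- Law of a random `m × n` matrix with i.i.d. `N(0, 1/m)` entries. -/
def gaussMatrix (m n : ℕ) : Measure (Fin m → Fin n → ℝ) :=
  Measure.pi fun _ => Measure.pi fun _ => gaussianReal 0 (m : ℝ≥0)⁻¹

/-- Standard Gaussian vector `N(0, Id_n)`. -/
def gaussVec (n : ℕ) : Measure (Fin n → ℝ) := Measure.pi fun _ => gaussianReal 0 1

/-- Dot product. -/
def dot {n : ℕ} (x y : Fin n → ℝ) : ℝ := ∑ i, x i * y i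

/-- Gaussian width of S. -/
def gaussianWidth {n : ℕ} (S : Set (Fin n → ℝ)) : ℝ :=
  ∫ z, sSup ((fun x => dot z x) '' S) ∂(gaussVec n)

/-- `‖A^I x‖₂` : ℓ² norm of the rows of `Ax` indexed by `I`. -/
def rowNorm {m n : ℕ} (A : Fin m → Fin n → ℝ) (I : Finset (Fin m)) (x : Fin n → ℝ) : ℝ :=
  Real.sqrt (∑ i ∈ I, (mulVec' A x i) ^ 2)

/-- Covering number `N(S, δ)` by Euclidean balls of radius `δ` centered in `S`. -/
def coveringNumber {n : ℕ} (S : Set (Fin n → ℝ)) (δ : ℝ) : ℕ :=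
  sInf {k : ℕ | ∃ T : Finset (Fin n → ℝ), T.card = k ∧ ↑T ⊆ S ∧
    S ⊆ ⋃ c ∈ T, {x | enorm2 (x - c) ≤ δ}}

/-- Constrained (Mozorov) feasible set `{x : ‖y − |Ax|²‖₂ ≤ ρ}`. -/
def feasConst {m n : ℕ} (A : Fin m → Fin n → ℝ) (y : Fin m → ℝ) (ρ : ℝ) :
    Set (Fin n → ℝ) :=
  {x | enorm2 (fun i => y i - (mulVec' A x i) ^ 2) ≤ ρ}

/-- Penalized (Tikhonov) objective `F_{y,λ}(x) = ‖y − |Ax|²‖₂² + λ R(x)`. -/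
def Fpen {m n : ℕ} (A : Fin m → Fin n → ℝ) (y : Fin m → ℝ) (lam : ℝ)
    (R : (Fin n → ℝ) → EReal) (x : Fin n → ℝ) : EReal :=
  ((enorm2 (fun i => y i - (mulVec' A x i) ^ 2) ^ 2 : ℝ) : EReal) + (lam : EReal) * R x


open Topology

private lemma abs_le_enorm2 {n : ℕ} (v : Fin n → ℝ) (r : Fin n) : |v r| ≤ enorm2 v := by
  rw [← Real.sqrt_sq_eq_abs]
  exact Real.sqrt_le_sqrt (Finset.single_le_sum (fun i _ => sq_nonneg (v i)) (Finset.mem_univ r))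

private lemma mulVec'_continuous {m n : ℕ} (A : Fin m → Fin n → ℝ) (r : Fin m) :
    Continuous (fun x => mulVec' A x r) := by
  unfold mulVec'
  exact continuous_finset_sum _ fun j _ => (continuous_const.mul (continuous_apply j))

private lemma mulVec'_smul {m n : ℕ} (A : Fin m → Fin n → ℝ) (t : ℝ) (x : Fin n → ℝ) (r : Fin m) :
    mulVec' A (t • x) r = t * mulVec' A x r := by
  simp [mulVec', Finset.mul_sum]; ring_nf
  exact Finset.sum_congr rfl fun j _ => by ring

private lemma lsc_exists_min {α β : Type*} [TopologicalSpace α] [LinearOrder β]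
    {f : α → β} {K : Set α} (hK : IsCompact K) (hne : K.Nonempty)
    (hf : LowerSemicontinuous f) : ∃ x ∈ K, ∀ z ∈ K, f x ≤ f z := by
  by_contra h
  push_neg at h
  have hcover : K ⊆ ⋃ y ∈ K, {z | f y < f z} := by
    intro x hx
    obtain ⟨z, hz, hlt⟩ := h x hx
    exact Set.mem_biUnion hz hlt
  obtain ⟨T, hTsub, hTfin, hTcover⟩ := hK.elim_finite_subcover_image
    (fun y _ => hf.isOpen_preimage (f y)) hcover
  obtain ⟨x0, hx0⟩ := hne
  have hTne : T.Nonempty := by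
    rcases Set.mem_iUnion₂.1 (hTcover hx0) with ⟨y, hy, _⟩
    exact ⟨y, hy⟩
  obtain ⟨y0, hy0T, hy0min⟩ := hTfin.toFinset.exists_min_image f
    (by simpa [Set.Finite.toFinset_nonempty] using hTne)
  rw [Set.Finite.mem_toFinset] at hy0T
  rcases Set.mem_iUnion₂.1 (hTcover (hTsub hy0T)) with ⟨y, hyT, hlt⟩
  have : f y0 ≤ f y := hy0min y (hTfin.mem_toFinset.2 hyT)
  exact (lt_of_le_of_lt this hlt).false

private lemma bounded_sublevel {m n : ℕ} (A : Fin m → Fin n → ℝ) (y : Fin m → ℝ) (ρ : ℝ)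
    (R : (Fin n → ℝ) → EReal)
    (hRnonneg : ∀ x, 0 ≤ R x)
    (hker : {z : Fin n → ℝ | asympFun R z = 0} ∩ {z | mulVec' A z = 0} = {0})
    (c : ℝ) :
    Bornology.IsBounded {x | x ∈ feasConst A y ρ ∧ R x ≤ (c : EReal)} := by
  by_contra hb
  rw [isBounded_iff_forall_norm_le] at hb
  push_neg at hb
  have hseq : ∀ k : ℕ, ∃ x, (x ∈ feasConst A y ρ ∧ R x ≤ (c : EReal)) ∧ (k : ℝ) < ‖x‖ := by
    intro k
    obtain ⟨x, hx, hn⟩ := hb k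
    exact ⟨x, hx, hn⟩
  choose x hxS hxn using hseq
  set t : ℕ → ℝ := fun k => ‖x k‖ with ht
  have htpos : ∀ k, 0 < t k := fun k => lt_of_le_of_lt (Nat.cast_nonneg k) (hxn k)
  set z : ℕ → (Fin n → ℝ) := fun k => (t k)⁻¹ • x k with hzdef
  have hz : ∀ k, z k ∈ Metric.sphere (0 : Fin n → ℝ) 1 := by
    intro k
    simp only [Metric.mem_sphere, dist_zero_right, hzdef, norm_smul, norm_inv,
      Real.norm_eq_abs, abs_of_pos (htpos k)]
    exact inv_mul_cancel₀ (htpos k).ne'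
  obtain ⟨zl, hzlmem, φ, hφ, hconv⟩ := (isCompact_sphere (0 : Fin n → ℝ) 1).tendsto_subseq hz
  have htφ : Tendsto (fun k => t (φ k)) atTop atTop :=
    tendsto_atTop_mono
      (fun k => le_of_lt (lt_of_le_of_lt (Nat.cast_le.2 hφ.le_apply) (hxn (φ k))))
      tendsto_natCast_atTop_atTop
  -- the limit direction z lies in both kernels
  have hmap : Tendsto (fun k => (z (φ k), t (φ k))) atTop ((𝓝 zl) ×ˢ atTop) :=
    hconv.prodMk htφ
  have hle : asympFun R zl ≤
      liminf (fun k => R (t (φ k) • z (φ k)) * (((t (φ k))⁻¹ : ℝ) : EReal)) atTop := by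
    unfold asympFun
    refine le_trans (liminf_le_liminf_of_le hmap) (le_of_eq ?_)
    rw [liminf, liminf, map_map]
    rfl
  have hsmul : ∀ k, t (φ k) • z (φ k) = x (φ k) := fun k =>
    smul_inv_smul₀ (htpos (φ k)).ne' (x (φ k))
  have h1 : asympFun R zl ≤ 0 := by
    refine hle.trans ?_
    have hb2 : liminf (fun k => R (t (φ k) • z (φ k)) * (((t (φ k))⁻¹ : ℝ) : EReal)) atTop ≤
        liminf (fun k => ((c * (t (φ k))⁻¹ : ℝ) : EReal)) atTop := by
      refine liminf_le_liminf (Filter.Eventually.of_forall fun k => ?_)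
      rw [hsmul k, EReal.coe_mul]
      exact mul_le_mul_of_nonneg_right (hxS (φ k)).2
        (EReal.coe_nonneg.2 (inv_nonneg.2 (htpos (φ k)).le))
    refine hb2.trans (le_of_eq ?_)
    have : Tendsto (fun k => ((c * (t (φ k))⁻¹ : ℝ) : EReal)) atTop (𝓝 ((0 : ℝ) : EReal)) := by
      rw [EReal.tendsto_coe]
      simpa using (tendsto_inv_atTop_zero.comp htφ).const_mul c
    rw [this.liminf_eq]
    norm_num
  have h0 : (0 : EReal) ≤ asympFun R zl := by
    refine le_liminf_of_le (by isBoundedDefault) ?_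
    have : ∀ᶠ p : (Fin n → ℝ) × ℝ in (𝓝 zl) ×ˢ atTop, 0 < p.2 :=
      Filter.Eventually.prod_inr (eventually_gt_atTop 0) _
    filter_upwards [this] with p hp
    exact mul_nonneg (hRnonneg _) (EReal.coe_nonneg.2 (inv_nonneg.2 hp.le))
  have hasymp : asympFun R zl = 0 := le_antisymm h1 h0
  have hAzl : mulVec' A zl = 0 := by
    funext r
    have hcont : Tendsto (fun k => mulVec' A (z (φ k)) r) atTop (𝓝 (mulVec' A zl r)) :=
      ((mulVec'_continuous A r).tendsto zl).comp hconv
    have hbound : ∀ k, |mulVec' A (z (φ k)) r| ≤ (t (φ k))⁻¹ * Real.sqrt (ρ + |y r|) := by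
      intro k
      have hfeas := (hxS (φ k)).1
      have h1 : |y r - (mulVec' A (x (φ k)) r) ^ 2| ≤ ρ := by
        have := (abs_le_enorm2 (fun i => y i - (mulVec' A (x (φ k)) i) ^ 2) r).trans hfeas
        simpa using this
      have h2 : (mulVec' A (x (φ k)) r) ^ 2 ≤ ρ + |y r| := by
        have := (abs_le.1 h1).1
        nlinarith [abs_nonneg (y r), le_abs_self (y r), neg_abs_le (y r)]
      have h3 : |mulVec' A (x (φ k)) r| ≤ Real.sqrt (ρ + |y r|) := by
        rw [← Real.sqrt_sq_eq_abs]
        exact Real.sqrt_le_sqrt h2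
      have h4 : mulVec' A (z (φ k)) r = (t (φ k))⁻¹ * mulVec' A (x (φ k)) r :=
        mulVec'_smul A _ _ r
      rw [h4, abs_mul, abs_of_pos (inv_pos.2 (htpos (φ k)))]
      exact mul_le_mul_of_nonneg_left h3 (inv_nonneg.2 (htpos (φ k)).le)
    have hzero : Tendsto (fun k => mulVec' A (z (φ k)) r) atTop (𝓝 0) := by
      have hB : Tendsto (fun k => (t (φ k))⁻¹ * Real.sqrt (ρ + |y r|)) atTop (𝓝 0) := by
        simpa using (tendsto_inv_atTop_zero.comp htφ).mul_const (Real.sqrt (ρ + |y r|))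
      refine squeeze_zero_norm (fun k => ?_) hB
      simpa [Real.norm_eq_abs] using hbound k
    exact tendsto_nhds_unique hcont hzero
  have hzl0 : zl = (0 : Fin n → ℝ) := by
    have : zl ∈ ({z : Fin n → ℝ | asympFun R z = 0} ∩ {z | mulVec' A z = 0}) := ⟨hasymp, hAzl⟩
    rw [hker] at this
    exact this
  have hn1 : ‖zl‖ = 1 := by
    have := hzlmem
    rwa [Metric.mem_sphere, dist_zero_right] at this
  rw [hzl0, norm_zero] at hn1
  exact absurd hn1 (by norm_num)


/-- existence and compactness of the set of minimizers of the constrained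
(Mozorov) phase retrieval problem. -/
theorem statement11 {m n : ℕ} (A : Fin m → Fin n → ℝ) (y : Fin m → ℝ) (ρ : ℝ)
    (hρ : 0 ≤ ρ)
    (R : (Fin n → ℝ) → EReal)
    (hRbot : ∀ x, R x ≠ ⊥)
    (hRproper : ∃ x, R x ≠ ⊤)
    (hRlsc : LowerSemicontinuous R)
    (hfeas : ∃ x, R x ≠ ⊤ ∧ x ∈ feasConst A y ρ)
    (hRnonneg : ∀ x, 0 ≤ R x)
    (hker : {z : Fin n → ℝ | asympFun R z = 0} ∩ {z | mulVec' A z = 0} = {0}) :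
    (argminOn R (feasConst A y ρ)).Nonempty ∧ IsCompact (argminOn R (feasConst A y ρ)) := by
  obtain ⟨x0, hx0top, hx0S⟩ := hfeas
  set c : ℝ := (R x0).toReal with hcdef
  have hc : R x0 = (c : EReal) := (EReal.coe_toReal hx0top (hRbot x0)).symm
  -- the feasible set is closed
  have hgc : Continuous fun x : Fin n → ℝ => enorm2 (fun i => y i - (mulVec' A x i) ^ 2) := by
    apply Real.continuous_sqrt.comp
    exact continuous_finset_sum _ fun i _ =>
      (continuous_const.sub ((mulVec'_continuous A i).pow 2)).pow 2
  have hScl : IsClosed (feasConst A y ρ) := by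
    have : feasConst A y ρ =
        (fun x : Fin n → ℝ => enorm2 (fun i => y i - (mulVec' A x i) ^ 2)) ⁻¹' Set.Iic ρ := rfl
    rw [this]
    exact isClosed_Iic.preimage hgc
  -- the sublevel feasible set is compact and nonempty
  set K : Set (Fin n → ℝ) := {x | x ∈ feasConst A y ρ ∧ R x ≤ (c : EReal)} with hKdef
  have hKcl : IsClosed K := by
    have : K = feasConst A y ρ ∩ R ⁻¹' Set.Iic (c : EReal) := rfl
    rw [this]
    exact hScl.inter (hRlsc.isClosed_preimage _)
  have hKcp : IsCompact K :=
    Metric.isCompact_of_isClosed_isBounded hKcl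
      (bounded_sublevel A y ρ R hRnonneg hker c)
  have hKne : K.Nonempty := ⟨x0, hx0S, le_of_eq hc⟩
  obtain ⟨xm, hxmK, hxmmin⟩ := lsc_exists_min hKcp hKne hRlsc
  have hxmarg : xm ∈ argminOn R (feasConst A y ρ) := by
    refine ⟨hxmK.1, fun z hz => ?_⟩
    by_cases hzc : R z ≤ (c : EReal)
    · exact hxmmin z ⟨hz, hzc⟩
    · exact le_trans (le_trans (hxmmin x0 ⟨hx0S, le_of_eq hc⟩) (le_of_eq hc)) (le_of_not_ge hzc)
  refine ⟨⟨xm, hxmarg⟩, ?_⟩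
  have hsub : argminOn R (feasConst A y ρ) ⊆ K := by
    rintro a ⟨haS, hamin⟩
    exact ⟨haS, le_trans (hamin x0 hx0S) (le_of_eq hc)⟩
  have hargcl : IsClosed (argminOn R (feasConst A y ρ)) := by
    have : argminOn R (feasConst A y ρ) =
        feasConst A y ρ ∩ ⋂ z ∈ feasConst A y ρ, {x | R x ≤ R z} := by
      ext a
      simp [argminOn, Set.mem_iInter]
    rw [this]
    exact hScl.inter (isClosed_biInter fun z _ => hRlsc.isClosed_preimage (R z))
  exact hKcp.of_isClosed_subset hargcl hsub

end
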